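/- Eigenvector centrality is not a rational centrality measure: there do not exist, for each vertex v ∈ {1,2,3}, multivariate polynomials P_{3,v} and a polynomial Q_3 with rational coefficients in the variables X_e (e unordered pairs of distinct vertices of {1,2,3}) such that for every connected graph G on {1,2,3} with edge-indicator vector E one has Q_3[E] ≠ 0 and the eigenvector centrality of v in G equals P_{3,v}[E]/Q_3[E]. Here the eigenvector centrality of v in G is the v-th entry of the unique nonnegative eigenvector of the adjacency matrix of G for its largest eigenvalue, normalized so that the entries sum to 1. -/
import Mathlib


open scoped Classical

noncomputable section

/-- Edge variables: unordered pairs of distinct vertices. -/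
def EdgeVar (n : ℕ) : Type := {e : Sym2 (Fin n) // ¬ e.IsDiag}

/-- The 0/1 edge-indicator assignment of a graph `G` to the edge variables. -/
def edgeInd {n : ℕ} (G : SimpleGraph (Fin n)) (e : EdgeVar n) : ℚ :=
  if e.1 ∈ G.edgeSet then 1 else 0

/-- The adjacency matrix of `G` over `ℝ`. -/
def adjMat {n : ℕ} (G : SimpleGraph (Fin n)) : Matrix (Fin n) (Fin n) ℝ :=
  fun i j => if G.Adj i j then 1 else 0

/-- `μ` is the largest eigenvalue of the matrix `A`. -/
def IsLargestEigenvalue {n : ℕ} (A : Matrix (Fin n) (Fin n) ℝ) (μ : ℝ) : Prop :=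
  (∃ c : Fin n → ℝ, c ≠ 0 ∧ A.mulVec c = μ • c) ∧
    ∀ μ' : ℝ, (∃ c : Fin n → ℝ, c ≠ 0 ∧ A.mulVec c = μ' • c) → μ' ≤ μ

/-- The path graph 0 - 1 - 2 on `Fin 3`. -/
def pathG : SimpleGraph (Fin 3) :=
  SimpleGraph.fromRel (fun i j => (i = 0 ∧ j = 1) ∨ (i = 1 ∧ j = 2))

lemma pathG_adjMat : adjMat pathG = Matrix.of ![![0,1,0],![1,0,1],![0,1,0]] := by
  ext i j
  fin_cases i <;> fin_cases j <;>
    simp [adjMat, pathG, SimpleGraph.fromRel_adj]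

lemma pathG_connected : pathG.Connected := by
  have h01 : pathG.Adj 0 1 := by simp [pathG, SimpleGraph.fromRel_adj]
  have h12 : pathG.Adj 1 2 := by simp [pathG, SimpleGraph.fromRel_adj]
  rw [SimpleGraph.connected_iff]
  refine ⟨fun u v => ?_, ⟨0⟩⟩
  fin_cases u <;> fin_cases v
  · rfl
  · exact h01.reachable
  · exact h01.reachable.trans h12.reachable
  · exact h01.symm.reachable
  · rfl
  · exact h12.reachable
  · exact (h01.reachable.trans h12.reachable).symm
  · exact h12.symm.reachable
  · rfl

lemma sqrt2_sq : Real.sqrt 2 ^ 2 = 2 := Real.sq_sqrt (by norm_num)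

/-- The Perron eigenvector of the path graph: (1 - √2/2, √2 - 1, 1 - √2/2). -/
def evec : Fin 3 → ℝ := ![1 - Real.sqrt 2 / 2, Real.sqrt 2 - 1, 1 - Real.sqrt 2 / 2]

lemma pathG_mulVec (c : Fin 3 → ℝ) :
    (adjMat pathG).mulVec c = ![c 1, c 0 + c 2, c 1] := by
  rw [pathG_adjMat]
  ext i
  fin_cases i <;>
    simp [Matrix.mulVec, dotProduct, Fin.sum_univ_three]

lemma evec_eigen : (adjMat pathG).mulVec evec = Real.sqrt 2 • evec := by
  rw [pathG_mulVec]
  have h := sqrt2_sq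
  ext i
  fin_cases i <;> simp [evec] <;> nlinarith [h]

lemma pathG_largest : IsLargestEigenvalue (adjMat pathG) (Real.sqrt 2) := by
  constructor
  · refine ⟨evec, ?_, evec_eigen⟩
    intro h
    have h0 : evec 0 = 0 := by rw [h]; rfl
    have hs := sqrt2_sq
    have : Real.sqrt 2 = 2 := by simp [evec] at h0; nlinarith
    nlinarith [Real.sqrt_nonneg 2]
  · rintro μ' ⟨c, hc, hm⟩
    rw [pathG_mulVec] at hm
    have e0 : c 1 = μ' * c 0 := by have := congrFun hm 0; simpa using this
    have e1 : c 0 + c 2 = μ' * c 1 := by have := congrFun hm 1; simpa using this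
    have e2 : c 1 = μ' * c 2 := by have := congrFun hm 2; simpa using this
    by_cases hμ : μ' ≤ 0
    · exact hμ.trans (Real.sqrt_nonneg 2)
    push_neg at hμ
    have hc02 : c 0 = c 2 := by
      have : μ' * c 0 = μ' * c 2 := e0 ▸ e2
      exact mul_left_cancel₀ (ne_of_gt hμ) this
    have hc0 : c 0 ≠ 0 := by
      intro h0
      apply hc
      funext i
      have h1 : c 1 = 0 := by rw [e0, h0, mul_zero]
      have h2 : c 2 = 0 := hc02 ▸ h0
      fin_cases i <;> simp [h0, h1, h2]
    have hsq : μ' ^ 2 = 2 := by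
      have : 2 * c 0 = μ' ^ 2 * c 0 := by
        have := e1
        rw [← hc02, e0] at this
        nlinarith
      have := mul_right_cancel₀ hc0 this
      linarith
    nlinarith [sqrt2_sq, Real.sqrt_nonneg 2, sq_nonneg (μ' - Real.sqrt 2)]

/-- Eigenvector centrality is not a rational centrality measure: there
are no polynomials `P_{3,v}`, `Q₃` with rational coefficients in the edge variables of
`{1,2,3}` such that for every connected graph `G` on three vertices, `Q₃[E] ≠ 0` and the
eigenvector centrality of every vertex `v` (the `v`-th entry of the nonnegative eigenvector
of the adjacency matrix for its largest eigenvalue, normalized to sum `1`) equals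
`P_{3,v}[E]/Q₃[E]`. -/
theorem eigenvector_centrality_not_rational :
    ¬ ∃ (P : Fin 3 → MvPolynomial (EdgeVar 3) ℚ) (Q : MvPolynomial (EdgeVar 3) ℚ),
      ∀ G : SimpleGraph (Fin 3), G.Connected →
        MvPolynomial.eval (edgeInd G) Q ≠ 0 ∧
          ∀ (μ : ℝ) (c : Fin 3 → ℝ),
            IsLargestEigenvalue (adjMat G) μ →
            (adjMat G).mulVec c = μ • c → (∀ i, 0 ≤ c i) → (∑ i, c i) = 1 →
            ∀ v : Fin 3,
              c v = ((MvPolynomial.eval (edgeInd G) (P v) : ℚ) : ℝ) /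
                ((MvPolynomial.eval (edgeInd G) Q : ℚ) : ℝ) := by
  rintro ⟨P, Q, hPQ⟩
  obtain ⟨hQ, h⟩ := hPQ pathG pathG_connected
  have hs := sqrt2_sq
  have hnn : ∀ i, 0 ≤ evec i := by
    intro i
    fin_cases i <;> simp [evec] <;> nlinarith [Real.sqrt_nonneg 2]
  have hsum : (∑ i, evec i) = 1 := by
    simp [Fin.sum_univ_three, evec]; ring
  have h0 := h (Real.sqrt 2) evec pathG_largest evec_eigen hnn hsum 0
  have : Real.sqrt 2 =
      ((2 - 2 * (MvPolynomial.eval (edgeInd pathG) (P 0) /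
        MvPolynomial.eval (edgeInd pathG) Q) : ℚ) : ℝ) := by
    have : evec 0 = 1 - Real.sqrt 2 / 2 := rfl
    rw [this] at h0
    push_cast
    linarith
  exact irrational_sqrt_two ⟨_, this.symm⟩

end
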